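/- If n > t^m, then the set {1, t, t², ..., t^{m-1}} is a t-free set of size m in Z_n. -/

import Mathlib

private lemma sum_mod_count (t : ℕ) (A : Multiset ℕ) :
    (A.map (t ^ ·)).sum % t = A.count 0 % t := by
  induction A using Multiset.induction_on with
  | empty => simp
  | cons a A ih =>
    rw [Multiset.map_cons, Multiset.sum_cons, Multiset.count_cons]
    by_cases h : a = 0
    · subst h
      simp only [pow_zero, if_pos rfl]
      have : (1 : ℕ) + (A.map (t ^ ·)).sum ≡ 1 + A.count 0 [MOD t] :=
        Nat.ModEq.add_left 1 ih
      simpa [Nat.add_comm, Nat.ModEq] using this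
    · have hd : t ∣ t ^ a := dvd_pow_self t h
      have h0 : ¬ (0 = a) := fun h' => h h'.symm
      rw [if_neg h0, Nat.add_zero]
      have : t ^ a + (A.map (t ^ ·)).sum ≡ 0 + (A.map (t ^ ·)).sum [MOD t] :=
        Nat.ModEq.add_right _ ((Nat.modEq_zero_iff_dvd).2 hd)
      rw [Nat.zero_add] at this
      exact this.trans ih

private lemma key (t : ℕ) (ht : 2 ≤ t) (s : ℕ) : ∀ A B : Multiset ℕ,
    Multiset.card A + Multiset.card B ≤ t →
    (A.map (t ^ ·)).sum = s → (B.map (t ^ ·)).sum = s → A = B := by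
  induction s using Nat.strong_induction_on with
  | _ s IH =>
  intro A B hcard hA hB
  rcases Nat.eq_zero_or_pos s with rfl | hs
  · have hA0 : A = 0 := by
      rw [Multiset.sum_eq_zero_iff] at hA
      rw [← Multiset.map_eq_zero (f := (t ^ ·))]
      by_contra hne
      obtain ⟨x, hx⟩ := Multiset.exists_mem_of_ne_zero hne
      have h1 := hA x hx
      obtain ⟨i, _, rfl⟩ := Multiset.mem_map.1 hx
      have h2 : 0 < t ^ i := Nat.pow_pos (by omega)
      omega
    have hB0 : B = 0 := by
      rw [Multiset.sum_eq_zero_iff] at hB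
      rw [← Multiset.map_eq_zero (f := (t ^ ·))]
      by_contra hne
      obtain ⟨x, hx⟩ := Multiset.exists_mem_of_ne_zero hne
      have h1 := hB x hx
      obtain ⟨i, _, rfl⟩ := Multiset.mem_map.1 hx
      have h2 : 0 < t ^ i := Nat.pow_pos (by omega)
      omega
    rw [hA0, hB0]
  · set zA := A.count 0 with hzA
    set zB := B.count 0 with hzB
    have hmodA : s % t = zA % t := by rw [← hA]; exact sum_mod_count t A
    have hmodB : s % t = zB % t := by rw [← hB]; exact sum_mod_count t B
    have hzAle : zA ≤ Multiset.card A := Multiset.count_le_card 0 A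
    have hzBle : zB ≤ Multiset.card B := Multiset.count_le_card 0 B
    have hz : zA = zB := by
      by_contra hne
      have hmod : zA % t = zB % t := hmodA ▸ hmodB
      have hcases : zA = t ∧ zB = 0 ∨ zA = 0 ∧ zB = t := by
        rcases Nat.lt_or_ge zA zB with h | h
        · have h1 : t ∣ zB - zA := (Nat.modEq_iff_dvd' (le_of_lt h)).1 hmod
          have h2 : t ≤ zB - zA := Nat.le_of_dvd (by omega) h1
          omega
        · have h1 : t ∣ zA - zB := (Nat.modEq_iff_dvd' h).1 hmod.symm
          have h2 : t ≤ zA - zB := Nat.le_of_dvd (by omega) h1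
          omega
      rcases hcases with ⟨hA', hB'⟩ | ⟨hA', hB'⟩
      · have hBe : B = 0 := Multiset.card_eq_zero.1 (by omega)
        rw [hBe] at hB; simp at hB; omega
      · have hAe : A = 0 := Multiset.card_eq_zero.1 (by omega)
        rw [hAe] at hA; simp at hA; omega
    set A₁ := A.filter (fun a => ¬ a = 0) with hA₁
    set B₁ := B.filter (fun a => ¬ a = 0) with hB₁
    have hA₁mem : ∀ x ∈ A₁, ¬ x = 0 := by
      intro x hx; rw [hA₁] at hx; exact (Multiset.mem_filter.1 hx).2
    have hB₁mem : ∀ x ∈ B₁, ¬ x = 0 := by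
      intro x hx; rw [hB₁] at hx; exact (Multiset.mem_filter.1 hx).2
    have hAsplit : Multiset.replicate zA 0 + A₁ = A := by
      rw [hA₁, hzA, ← Multiset.filter_eq' A 0]; exact Multiset.filter_add_not _ A
    have hBsplit : Multiset.replicate zB 0 + B₁ = B := by
      rw [hB₁, hzB, ← Multiset.filter_eq' B 0]; exact Multiset.filter_add_not _ B
    have hsA₁ : zA + (A₁.map (t ^ ·)).sum = s := by
      have h' := hA
      rw [← hAsplit, Multiset.map_add, Multiset.sum_add, Multiset.map_replicate] at h'
      simpa using h'
    have hsB₁ : zB + (B₁.map (t ^ ·)).sum = s := by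
      have h' := hB
      rw [← hBsplit, Multiset.map_add, Multiset.sum_add, Multiset.map_replicate] at h'
      simpa using h'
    set A₂ := A₁.map (fun i => i - 1) with hA₂
    set B₂ := B₁.map (fun i => i - 1) with hB₂
    have hfacA : (A₁.map (t ^ ·)).sum = t * (A₂.map (t ^ ·)).sum := by
      rw [hA₂, Multiset.map_map, ← Multiset.sum_map_mul_left]
      apply congrArg
      apply Multiset.map_congr rfl
      intro x hx
      have hx0 := hA₁mem x hx
      show t ^ x = t * t ^ (x - 1)
      rw [← pow_succ']
      congr 1
      omega
    have hfacB : (B₁.map (t ^ ·)).sum = t * (B₂.map (t ^ ·)).sum := by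
      rw [hB₂, Multiset.map_map, ← Multiset.sum_map_mul_left]
      apply congrArg
      apply Multiset.map_congr rfl
      intro x hx
      have hx0 := hB₁mem x hx
      show t ^ x = t * t ^ (x - 1)
      rw [← pow_succ']
      congr 1
      omega
    set s₂ := (A₂.map (t ^ ·)).sum with hs₂
    have hseq : s = zA + t * s₂ := by rw [← hsA₁, hfacA]
    have hsB₂ : (B₂.map (t ^ ·)).sum = s₂ := by
      have h1 : (B₁.map (t ^ ·)).sum = (A₁.map (t ^ ·)).sum := by omega
      rw [hfacA, hfacB] at h1
      exact Nat.eq_of_mul_eq_mul_left (by omega) h1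
    have hs₂lt : s₂ < s := by
      rcases Nat.eq_zero_or_pos s₂ with h0 | hpos
      · omega
      · have h2 : 2 * s₂ ≤ t * s₂ := Nat.mul_le_mul ht (le_refl s₂)
        omega
    have hcard₂ : Multiset.card A₂ + Multiset.card B₂ ≤ t := by
      have h1 : Multiset.card A₂ ≤ Multiset.card A := by
        rw [hA₂, Multiset.card_map, hA₁]
        exact Multiset.card_le_card (Multiset.filter_le _ A)
      have h2 : Multiset.card B₂ ≤ Multiset.card B := by
        rw [hB₂, Multiset.card_map, hB₁]
        exact Multiset.card_le_card (Multiset.filter_le _ B)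
      omega
    have heq₂ : A₂ = B₂ := IH s₂ hs₂lt A₂ B₂ hcard₂ rfl hsB₂
    have hA₁eq : A₁ = A₂.map (· + 1) := by
      rw [hA₂, Multiset.map_map]
      symm
      rw [show A₁ = A₁.map id from (Multiset.map_id A₁).symm]
      apply Multiset.map_congr
      · simp
      · intro x hx
        have hx0 := hA₁mem x hx
        show x - 1 + 1 = id x
        simp; omega
    have hB₁eq : B₁ = B₂.map (· + 1) := by
      rw [hB₂, Multiset.map_map]
      symm
      rw [show B₁ = B₁.map id from (Multiset.map_id B₁).symm]
      apply Multiset.map_congr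
      · simp
      · intro x hx
        have hx0 := hB₁mem x hx
        show x - 1 + 1 = id x
        simp; omega
    rw [← hAsplit, ← hBsplit, hz, hA₁eq, hB₁eq, heq₂]


private lemma lift_multiset {α β : Type*} (f : β → α) (P : β → Prop) (A : Multiset α)
    (h : ∀ x ∈ A, ∃ i, P i ∧ f i = x) :
    ∃ A' : Multiset β, (∀ i ∈ A', P i) ∧ A'.map f = A := by
  induction A using Multiset.induction_on with
  | empty => exact ⟨0, by simp, by simp⟩
  | cons a A ih =>
    obtain ⟨A', hP, hmap⟩ := ih (fun x hx => h x (Multiset.mem_cons_of_mem hx))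
    obtain ⟨i, hi, hfi⟩ := h a (Multiset.mem_cons_self a A)
    refine ⟨i ::ₘ A', ?_, by rw [Multiset.map_cons, hmap, hfi]⟩
    intro j hj; rcases Multiset.mem_cons.1 hj with rfl | hj
    · exact hi
    · exact hP j hj


/-- `S` is a `t`-free set in the additive abelian group `G`: whenever a sum of `k`
elements of `S` equals a sum of `l` elements of `S` with `k + l ≤ t`, the two
multisets of terms coincide (in particular `k = l`). -/
def IsTFreeSet {G : Type*} [AddCommGroup G] (t : ℕ) (S : Set G) : Prop :=
  ∀ A B : Multiset G, (∀ x ∈ A, x ∈ S) → (∀ x ∈ B, x ∈ S) →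
    Multiset.card A + Multiset.card B ≤ t → A.sum = B.sum → A = B

theorem powers_t_free (t m n : ℕ) (ht : 2 ≤ t) (hn : t ^ m < n) :
    IsTFreeSet t (↑((Finset.range m).image (fun i => ((t : ZMod n)) ^ i)) : Set (ZMod n)) ∧
    ((Finset.range m).image (fun i => ((t : ZMod n)) ^ i)).card = m := by
  haveI : NeZero n := ⟨by have h1 : 1 ≤ t ^ m := Nat.one_le_pow m t (by omega); omega⟩
  have hcast : ∀ i : ℕ, ((t : ZMod n)) ^ i = ((t ^ i : ℕ) : ZMod n) := by
    intro i; push_cast; ring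
  have hpowlt : ∀ i < m, t ^ i < n := fun i hi =>
    lt_trans (Nat.pow_lt_pow_right (by omega) hi) hn
  constructor
  · intro A B hAmem hBmem hcard hsum
    obtain ⟨A', hAm, hAmap⟩ := lift_multiset (fun i => ((t : ZMod n)) ^ i) (· < m) A (by
      intro x hx
      have := hAmem x hx
      simp only [Finset.coe_image, Set.mem_image, Finset.mem_coe, Finset.mem_range] at this
      obtain ⟨i, hi, hfi⟩ := this
      exact ⟨i, hi, hfi⟩)
    obtain ⟨B', hBm, hBmap⟩ := lift_multiset (fun i => ((t : ZMod n)) ^ i) (· < m) B (by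
      intro x hx
      have := hBmem x hx
      simp only [Finset.coe_image, Set.mem_image, Finset.mem_coe, Finset.mem_range] at this
      obtain ⟨i, hi, hfi⟩ := this
      exact ⟨i, hi, hfi⟩)
    have hmapcast : ∀ M : Multiset ℕ,
        (M.map fun i => ((t : ZMod n)) ^ i) = Multiset.map (Nat.cast : ℕ → ZMod n) (M.map (t ^ ·)) := by
      intro M
      rw [Multiset.map_map]
      exact Multiset.map_congr rfl (fun x _ => hcast x)
    have hsumA : A.sum = (((A'.map (t ^ ·)).sum : ℕ) : ZMod n) := by
      rw [← hAmap, hmapcast, ← Nat.cast_multiset_sum]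
    have hsumB : B.sum = (((B'.map (t ^ ·)).sum : ℕ) : ZMod n) := by
      rw [← hBmap, hmapcast, ← Nat.cast_multiset_sum]
    have hcardA : Multiset.card A = Multiset.card A' := by
      rw [← hAmap, Multiset.card_map]
    have hcardB : Multiset.card B = Multiset.card B' := by
      rw [← hBmap, Multiset.card_map]
    -- bounds on the natural number sums
    have hbound : ∀ (M : Multiset ℕ), (∀ i ∈ M, i < m) → Multiset.card M ≤ t →
        (M.map (t ^ ·)).sum < n := by
      intro M hM hMc
      rcases Nat.eq_zero_or_pos m with rfl | hm
      · have hM0 : M = 0 :=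
          Multiset.eq_zero_of_forall_notMem fun x hx => absurd (hM x hx) (Nat.not_lt_zero x)
        subst hM0
        have hn0 : 0 < n := Nat.pos_of_ne_zero (NeZero.ne n)
        simpa using hn0
      · have hle : (M.map (t ^ ·)).sum ≤ Multiset.card (M.map (t ^ ·)) • t ^ (m - 1) := by
          apply Multiset.sum_le_card_nsmul
          intro x hx
          obtain ⟨i, hi, rfl⟩ := Multiset.mem_map.1 hx
          exact Nat.pow_le_pow_right (by omega) (by have := hM i hi; omega)
        rw [Multiset.card_map, smul_eq_mul] at hle
        calc (M.map (t ^ ·)).sum ≤ Multiset.card M * t ^ (m - 1) := hle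
          _ ≤ t * t ^ (m - 1) := Nat.mul_le_mul_right _ hMc
          _ = t ^ m := by rw [← pow_succ']; congr 1; omega
          _ < n := hn
    have hltA : (A'.map (t ^ ·)).sum < n := hbound A' hAm (by omega)
    have hltB : (B'.map (t ^ ·)).sum < n := hbound B' hBm (by omega)
    have hnatsum : (A'.map (t ^ ·)).sum = (B'.map (t ^ ·)).sum := by
      have hc := hsum
      rw [hsumA, hsumB] at hc
      have hv := congrArg ZMod.val hc
      rwa [ZMod.val_cast_of_lt hltA, ZMod.val_cast_of_lt hltB] at hv
    have hA'B' : A' = B' := key t ht _ A' B' (by omega) rfl hnatsum.symm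
    rw [← hAmap, ← hBmap, hA'B']
  · rw [Finset.card_image_of_injOn, Finset.card_range]
    intro i hi j hj hij
    simp only [Finset.coe_range, Set.mem_Iio] at hi hj
    simp only [hcast] at hij
    have hv := congrArg ZMod.val hij
    rw [ZMod.val_cast_of_lt (hpowlt i hi), ZMod.val_cast_of_lt (hpowlt j hj)] at hv
    exact Nat.pow_right_injective ht hv
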